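/- Let ℏ > 0, N ∈ ℕ, and t⁺ > 0, |t⁻| > 0 real. The Jacobi polynomial k(r) = ∑_{n=0}^{N} (N!/(n!(N−n)!)) · ((t⁺−ℏ)(t⁺−2ℏ)⋯(t⁺−nℏ))/((|t⁻|+ℏ)(|t⁻|+2ℏ)⋯(|t⁻|+nℏ)) · rⁿ satisfies the hypergeometric differential equation r(1−r)k'' + (α⁺ − (α⁻ − N + 1)r)k' + Nα⁻ k = 0, where α± = 1 − t∓/ℏ and t⁻ = −|t⁻|. -/

import Mathlib

open Real Finset

lemma aux_deriv (M : ℕ) (a : ℕ → ℝ) (hM : a (M+1) = 0) (r : ℝ) :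
    deriv (fun x : ℝ => ∑ n ∈ Finset.range (M+1), a n * x^n) r
      = ∑ n ∈ Finset.range (M+1), ((n:ℝ)+1) * a (n+1) * r^n := by
  have h : HasDerivAt (fun x : ℝ => ∑ n ∈ Finset.range (M+1), a n * x^n)
      (∑ n ∈ Finset.range (M+1), a n * ((n:ℝ) * r^(n-1))) r := by
    apply HasDerivAt.fun_sum
    intro n _
    exact (hasDerivAt_pow n r).const_mul (a n)
  rw [h.deriv]
  rw [Finset.sum_range_succ' (fun n => a n * ((n:ℝ)*r^(n-1)))]
  rw [Finset.sum_range_succ (fun n => ((n:ℝ)+1)*a (n+1)*r^n)]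
  rw [hM]
  simp only [Nat.cast_zero, zero_mul, mul_zero, add_zero, Nat.add_sub_cancel]
  apply Finset.sum_congr rfl
  intro n _
  push_cast
  ring

lemma aux_shift (M : ℕ) (a b : ℕ → ℝ) (h0 : b 0 = 0) (hs : ∀ n, b (n+1) = a n) (r : ℝ) :
    r * ∑ n ∈ Finset.range M, a n * r^n = ∑ n ∈ Finset.range (M+1), b n * r^n := by
  rw [Finset.sum_range_succ' (fun n => b n * r^n), h0, Finset.mul_sum]
  simp only [hs, pow_zero, mul_one, zero_mul, add_zero]
  apply Finset.sum_congr rfl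
  intro n _
  ring

lemma aux_main (N : ℕ) (αp αm : ℝ) (c : ℕ → ℝ) (hcN : c (N+1) = 0) (hcN2 : c (N+2) = 0)
    (hrec : ∀ n : ℕ, ((n:ℝ)+1)*((n:ℝ)+αp) * c (n+1) + ((N:ℝ)-(n:ℝ))*((n:ℝ)+αm) * c n = 0)
    (k : ℝ → ℝ) (hk : k = fun r => ∑ n ∈ Finset.range (N+1), c n * r^n) :
    ∀ r : ℝ, r*(1-r) * deriv (deriv k) r + (αp - (αm - N + 1)*r) * deriv k r
      + N * αm * k r = 0 := by
  intro r
  have hD1 : deriv k = fun x : ℝ => ∑ n ∈ Finset.range (N+1), (((n:ℝ)+1) * c (n+1)) * x^n := by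
    funext x
    rw [hk, aux_deriv N c hcN x]
  have hD2 : deriv (deriv k) r
      = ∑ n ∈ Finset.range (N+1), (((n:ℝ)+1) * (((n:ℝ)+2) * c (n+2))) * r^n := by
    rw [hD1, aux_deriv N (fun n => ((n:ℝ)+1) * c (n+1)) (by simp [hcN2]) r]
    apply Finset.sum_congr rfl
    intro n _; push_cast; ring
  have h1 : r * deriv (deriv k) r
      = ∑ n ∈ Finset.range (N+1), ((n:ℝ)*(((n:ℝ)+1) * c (n+1))) * r^n := by
    rw [hD2, aux_shift (N+1) _ (fun n => (n:ℝ)*(((n:ℝ)+1) * c (n+1)))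
      (by norm_num) (by intro n; push_cast; ring) r,
      Finset.sum_range_succ]
    simp [hcN2]
  have h2 : r * (r * deriv (deriv k) r)
      = ∑ n ∈ Finset.range (N+1), (((n:ℝ)-1)*((n:ℝ) * c n)) * r^n := by
    rw [h1, aux_shift (N+1) _ (fun n => ((n:ℝ)-1)*((n:ℝ) * c n))
      (by norm_num) (by intro n; push_cast; ring) r,
      Finset.sum_range_succ]
    simp [hcN]
  have h3 : r * deriv k r
      = ∑ n ∈ Finset.range (N+1), ((n:ℝ) * c n) * r^n := by
    rw [hD1, aux_shift (N+1) _ (fun n => (n:ℝ) * c n)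
      (by norm_num) (by intro n; push_cast; ring) r,
      Finset.sum_range_succ]
    simp [hcN]
  have key : r*(1-r) * deriv (deriv k) r + (αp - (αm - N + 1)*r) * deriv k r
      + N * αm * k r
      = (r * deriv (deriv k) r) - r * (r * deriv (deriv k) r)
        + αp * deriv k r - (αm - N + 1) * (r * deriv k r) + N * αm * k r := by ring
  rw [key, h2, h1, h3, hD1, hk]
  rw [Finset.mul_sum, Finset.mul_sum, ← Finset.sum_sub_distrib, ← Finset.sum_add_distrib,
    ← Finset.sum_sub_distrib]
  rw [show ((N:ℝ) * αm * ∑ n ∈ Finset.range (N+1), c n * r ^ n)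
      = ∑ n ∈ Finset.range (N+1), (N:ℝ) * αm * (c n * r ^ n) from Finset.mul_sum _ _ _]
  rw [← Finset.sum_add_distrib]
  apply Finset.sum_eq_zero
  intro n _
  linear_combination r^n * hrec n

theorem stmt13 (ℏ : ℝ) (hℏ : 0 < ℏ) (N : ℕ) (tp tm : ℝ) (htp : 0 < tp) (htm : tm < 0)
    (αp αm : ℝ) (hαp : αp = 1 - tm / ℏ) (hαm : αm = 1 - tp / ℏ)
    (k : ℝ → ℝ)
    (hk : ∀ r : ℝ, k r = ∑ n ∈ Finset.range (N+1),
      (N.choose n : ℝ) * (∏ j ∈ Finset.Icc 1 n, (tp - (j:ℝ)*ℏ)) /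
        (∏ j ∈ Finset.Icc 1 n, (-tm + (j:ℝ)*ℏ)) * r^n) :
    ∀ r : ℝ, r*(1-r) * deriv (deriv k) r + (αp - (αm - N + 1)*r) * deriv k r
      + N * αm * k r = 0 := by
  set c : ℕ → ℝ := fun n => (N.choose n : ℝ) * (∏ j ∈ Finset.Icc 1 n, (tp - (j:ℝ)*ℏ)) /
        (∏ j ∈ Finset.Icc 1 n, (-tm + (j:ℝ)*ℏ)) with hc
  have hQ : ∀ n : ℕ, 0 < ∏ j ∈ Finset.Icc 1 n, (-tm + (j:ℝ)*ℏ) := by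
    intro n
    apply Finset.prod_pos
    intro j _
    have : (0:ℝ) ≤ (j:ℝ)*ℏ := by positivity
    linarith
  have hczero : ∀ n : ℕ, N < n → c n = 0 := by
    intro n hn
    simp [hc, Nat.choose_eq_zero_of_lt hn]
  have hcN : c (N+1) = 0 := hczero _ (by omega)
  have hcN2 : c (N+2) = 0 := hczero _ (by omega)
  have hstep : ∀ n : ℕ, n < N →
      c (n+1) = c n * ((((N:ℝ)-(n:ℝ))*(tp-((n:ℝ)+1)*ℏ)) / ((((n:ℝ)+1))*(-tm+((n:ℝ)+1)*ℏ))) := by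
    intro n hn
    have hch : ((n:ℝ)+1) * (N.choose (n+1) : ℝ) = ((N:ℝ)-(n:ℝ)) * (N.choose n : ℝ) := by
      have := Nat.choose_succ_right_eq N n
      have hcast : ((N.choose (n+1) * (n+1) : ℕ) : ℝ) = ((N.choose n * (N - n) : ℕ) : ℝ) := by
        exact_mod_cast congrArg (Nat.cast : ℕ → ℝ) this
      push_cast [Nat.cast_sub hn.le] at hcast
      linarith
    have hP : (∏ j ∈ Finset.Icc 1 (n+1), (tp - (j:ℝ)*ℏ))
        = (∏ j ∈ Finset.Icc 1 n, (tp - (j:ℝ)*ℏ)) * (tp - ((n:ℝ)+1)*ℏ) := by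
      rw [Finset.prod_Icc_succ_top (by omega)]
      push_cast; ring
    have hQs : (∏ j ∈ Finset.Icc 1 (n+1), (-tm + (j:ℝ)*ℏ))
        = (∏ j ∈ Finset.Icc 1 n, (-tm + (j:ℝ)*ℏ)) * (-tm + ((n:ℝ)+1)*ℏ) := by
      rw [Finset.prod_Icc_succ_top (by omega)]
      push_cast; ring
    have hq0 : (∏ j ∈ Finset.Icc 1 n, (-tm + (j:ℝ)*ℏ)) ≠ 0 := (hQ n).ne'
    have hq1 : (-tm + ((n:ℝ)+1)*ℏ) ≠ 0 := by nlinarith [htm, hℏ]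
    have hn1 : ((n:ℝ)+1) ≠ 0 := by positivity
    simp only [hc, hP, hQs]
    rw [div_mul_div_comm, div_eq_div_iff (mul_ne_zero hq0 hq1) (mul_ne_zero hq0 (mul_ne_zero hn1 hq1))]
    linear_combination ((∏ j ∈ Finset.Icc 1 n, (tp - (j:ℝ)*ℏ)) * (tp - ((n:ℝ)+1)*ℏ)
      * (∏ j ∈ Finset.Icc 1 n, (-tm + (j:ℝ)*ℏ)) * (-tm + ((n:ℝ)+1)*ℏ)) * hch
  have hrec : ∀ n : ℕ, ((n:ℝ)+1)*((n:ℝ)+αp) * c (n+1) + ((N:ℝ)-(n:ℝ))*((n:ℝ)+αm) * c n = 0 := by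
    intro n
    rcases lt_trichotomy n N with hn | hn | hn
    · rw [hstep n hn, hαp, hαm]
      have hq1 : (-tm + ((n:ℝ)+1)*ℏ) ≠ 0 := by nlinarith [htm, hℏ]
      have hn1 : ((n:ℝ)+1) ≠ 0 := by positivity
      field_simp
      ring
    · subst hn
      rw [hcN]
      simp
    · rw [hczero n hn, hczero (n+1) (by omega)]
      simp
  exact aux_main N αp αm c hcN hcN2 hrec k (funext hk)
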